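/- arXiv:2003.05157 — 3 statements merged into one kernel-verified Lean document; each statement's English description precedes it below -/
import Mathlib

section
/- Let U₁ > 0 and U₂ be random variables with joint moment generating function M(t₁,t₂) = E[exp(t₁U₁ + t₂U₂)] finite in a neighborhood of the relevant domain. Then for positive integers j, k, E[U₂^j / U₁^k] = (1/Γ(k)) ∫₀^∞ t₁^{k-1} lim_{t₂→0⁻} ∂^j/∂t₂^j M(-t₁, t₂) dt₁, provided the expectation exists. -/
open MeasureTheory Filter

set_option maxHeartbeats 1000000 in
section

lemma aux_pow_le_exp (n : ℕ) {x : ℝ} (hx : 0 ≤ x) : x ^ n ≤ n.factorial * Real.exp x := by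
  have h := Real.sum_le_exp_of_nonneg hx (n + 1)
  have h1 : x ^ n / n.factorial ≤ Real.exp x :=
    le_trans (Finset.single_le_sum (f := fun i => x ^ i / i.factorial)
      (fun i _ => by positivity) (Finset.self_mem_range_succ n)) h
  have hf : (0:ℝ) < n.factorial := by exact_mod_cast n.factorial_pos
  calc x ^ n = x ^ n / n.factorial * n.factorial := by field_simp
  _ ≤ Real.exp x * n.factorial := by gcongr
  _ = n.factorial * Real.exp x := mul_comm _ _

lemma aux_abs_pow_le (n : ℕ) {ε : ℝ} (hε : 0 < ε) (x : ℝ) :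
    |x| ^ n ≤ (n.factorial / ε ^ n) * (Real.exp (ε * x) + Real.exp (-(ε * x))) := by
  have h : (ε * |x|) ^ n ≤ n.factorial * Real.exp (ε * |x|) :=
    aux_pow_le_exp n (by positivity)
  have h2 : Real.exp (ε * |x|) ≤ Real.exp (ε * x) + Real.exp (-(ε * x)) := by
    rcases abs_choice x with hc | hc <;> rw [hc]
    · exact le_add_of_nonneg_right (Real.exp_pos _).le
    · rw [mul_neg, ← neg_mul] at *
      exact le_add_of_nonneg_left (Real.exp_pos _).le
  have hεn : (0:ℝ) < ε ^ n := by positivity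
  have h4 : ε ^ n * |x| ^ n ≤ n.factorial * (Real.exp (ε * x) + Real.exp (-(ε * x))) := by
    rw [← mul_pow]
    exact h.trans (mul_le_mul_of_nonneg_left h2 (Nat.cast_nonneg _))
  rw [div_mul_eq_mul_div, le_div_iff₀ hεn, mul_comm]
  exact h4

lemma aux_integrable {Ω : Type*} [MeasurableSpace Ω] (P : Measure Ω)
    (V W : Ω → ℝ) (hV : Measurable V) (hW : Measurable W) (n : ℕ) {b : ℝ} (hb : b < 0)
    (h1 : Integrable (fun ω => Real.exp (V ω + b / 2 * W ω)) P)
    (h2 : Integrable (fun ω => Real.exp (V ω + 3 * b / 2 * W ω)) P) :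
    Integrable (fun ω => |W ω| ^ n * Real.exp (V ω + b * W ω)) P := by
  set ε : ℝ := -b / 2 with hεdef
  have hεpos : 0 < ε := by rw [hεdef]; linarith
  set C : ℝ := n.factorial / ε ^ n with hC
  have hC0 : 0 ≤ C := by positivity
  refine Integrable.mono ((h1.add h2).const_mul C) ?_ ?_
  · exact ((hW.abs.pow_const n).mul ((hV.add (hW.const_mul b)).exp)).aestronglyMeasurable
  · filter_upwards with ω
    simp only [Pi.add_apply]
    have hb1 : |W ω| ^ n ≤ C * (Real.exp (ε * W ω) + Real.exp (-(ε * W ω))) :=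
      aux_abs_pow_le n hεpos _
    have e1 : Real.exp (ε * W ω) * Real.exp (V ω + b * W ω)
        = Real.exp (V ω + b / 2 * W ω) := by
      rw [← Real.exp_add]; congr 1; rw [hεdef]; ring
    have e2 : Real.exp (-(ε * W ω)) * Real.exp (V ω + b * W ω)
        = Real.exp (V ω + 3 * b / 2 * W ω) := by
      rw [← Real.exp_add]; congr 1; rw [hεdef]; ring
    have hL : ‖|W ω| ^ n * Real.exp (V ω + b * W ω)‖
        = |W ω| ^ n * Real.exp (V ω + b * W ω) :=
      Real.norm_of_nonneg (by positivity)
    have hR : ‖C * (Real.exp (V ω + b / 2 * W ω) + Real.exp (V ω + 3 * b / 2 * W ω))‖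
        = C * (Real.exp (V ω + b / 2 * W ω) + Real.exp (V ω + 3 * b / 2 * W ω)) :=
      Real.norm_of_nonneg (by positivity)
    rw [hL, hR]
    calc |W ω| ^ n * Real.exp (V ω + b * W ω)
        ≤ C * (Real.exp (ε * W ω) + Real.exp (-(ε * W ω))) * Real.exp (V ω + b * W ω) := by
          gcongr
      _ = C * (Real.exp (V ω + b / 2 * W ω) + Real.exp (V ω + 3 * b / 2 * W ω)) := by
          rw [mul_assoc, add_mul, e1, e2]

lemma stepA {Ω : Type*} [MeasurableSpace Ω] (P : Measure Ω) [IsProbabilityMeasure P]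
    (U₁ U₂ : Ω → ℝ) (hU₁meas : Measurable U₁) (hU₂meas : Measurable U₂)
    (j : ℕ) (M : ℝ → ℝ → ℝ)
    (hM : ∀ t₁ t₂, M t₁ t₂ = ∫ ω, Real.exp (t₁ * U₁ ω + t₂ * U₂ ω) ∂P)
    (hMfin : ∀ t₁ > (0 : ℝ), ∀ t₂ ≤ (0 : ℝ),
      Integrable (fun ω => Real.exp (-t₁ * U₁ ω + t₂ * U₂ ω)) P)
    {t₁ : ℝ} (ht₁ : 0 < t₁)
    (hI : Integrable (fun ω => |U₂ ω| ^ j * Real.exp (-t₁ * U₁ ω)) P)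
    {l : ℝ}
    (hl : Tendsto (fun t₂ => iteratedDeriv j (fun s => M (-t₁) s) t₂)
        (nhdsWithin 0 (Set.Iio 0)) (nhds l)) :
    l = ∫ ω, U₂ ω ^ j * Real.exp (-t₁ * U₁ ω) ∂P := by
  have keyInt : ∀ (n : ℕ) {c : ℝ}, c < 0 →
      Integrable (fun ω => |U₂ ω| ^ n * Real.exp (-t₁ * U₁ ω + c * U₂ ω)) P := by
    intro n c hc
    exact aux_integrable P (fun ω => -t₁ * U₁ ω) U₂ (hU₁meas.const_mul (-t₁)) hU₂meas n hc
      (hMfin t₁ ht₁ (c / 2) (by linarith)) (hMfin t₁ ht₁ (3 * c / 2) (by linarith))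
  have measAux : ∀ (n : ℕ) (c : ℝ),
      AEStronglyMeasurable (fun ω => U₂ ω ^ n * Real.exp (-t₁ * U₁ ω + c * U₂ ω)) P := by
    intro n c
    exact ((hU₂meas.pow_const n).mul
      (((hU₁meas.const_mul (-t₁)).add (hU₂meas.const_mul c)).exp)).aestronglyMeasurable
  have normEq : ∀ (n : ℕ) (c : ℝ) (ω : Ω),
      ‖U₂ ω ^ n * Real.exp (-t₁ * U₁ ω + c * U₂ ω)‖
        = |U₂ ω| ^ n * Real.exp (-t₁ * U₁ ω + c * U₂ ω) := by
    intro n c ω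
    rw [norm_mul, Real.norm_eq_abs, Real.norm_eq_abs, abs_pow,
      abs_of_pos (Real.exp_pos _)]
  have keyInt' : ∀ (n : ℕ) {c : ℝ}, c < 0 →
      Integrable (fun ω => U₂ ω ^ n * Real.exp (-t₁ * U₁ ω + c * U₂ ω)) P := by
    intro n c hc
    refine (keyInt n hc).mono (measAux n c) ?_
    filter_upwards with ω
    rw [normEq n c ω, Real.norm_of_nonneg (by positivity)]
  set E : ℕ → ℝ → ℝ :=
    fun n c => ∫ ω, U₂ ω ^ n * Real.exp (-t₁ * U₁ ω + c * U₂ ω) ∂P with hE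
  have hasDeriv : ∀ (n : ℕ) {c : ℝ}, c < 0 → HasDerivAt (E n) (E (n + 1) c) c := by
    intro n c hc
    have hεpos : 0 < -c / 2 := by linarith
    have key := hasDerivAt_integral_of_dominated_loc_of_deriv_le (μ := P) (x₀ := c)
      (F := fun s ω => U₂ ω ^ n * Real.exp (-t₁ * U₁ ω + s * U₂ ω))
      (F' := fun s ω => U₂ ω ^ (n + 1) * Real.exp (-t₁ * U₁ ω + s * U₂ ω))
      (bound := fun ω => |U₂ ω| ^ (n + 1) * Real.exp (-t₁ * U₁ ω + c / 2 * U₂ ω)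
        + |U₂ ω| ^ (n + 1) * Real.exp (-t₁ * U₁ ω + 3 * c / 2 * U₂ ω))
      (Metric.ball_mem_nhds c hεpos) (Filter.Eventually.of_forall fun s => measAux n s) (keyInt' n hc)
      (measAux (n + 1) c) ?_ ((keyInt (n + 1) (by linarith : c / 2 < 0)).add
        (keyInt (n + 1) (by linarith : 3 * c / 2 < 0))) ?_
    · exact key.2
    · -- bound
      filter_upwards with ω
      intro s hs
      rw [Metric.mem_ball, Real.dist_eq] at hs
      have hs1 : s < c / 2 := by cases abs_lt.mp hs; linarith
      have hs2 : 3 * c / 2 < s := by cases abs_lt.mp hs; linarith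
      rw [normEq]
      rcases le_or_gt 0 (U₂ ω) with hω | hω
      · have : s * U₂ ω ≤ c / 2 * U₂ ω := mul_le_mul_of_nonneg_right hs1.le hω
        have h1 : |U₂ ω| ^ (n+1) * Real.exp (-t₁ * U₁ ω + s * U₂ ω)
            ≤ |U₂ ω| ^ (n+1) * Real.exp (-t₁ * U₁ ω + c / 2 * U₂ ω) := by
          gcongr <;> linarith
        exact h1.trans (le_add_of_nonneg_right (by positivity))
      · have : s * U₂ ω ≤ 3 * c / 2 * U₂ ω := by
          apply mul_le_mul_of_nonpos_right hs2.le hω.le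
        have h1 : |U₂ ω| ^ (n+1) * Real.exp (-t₁ * U₁ ω + s * U₂ ω)
            ≤ |U₂ ω| ^ (n+1) * Real.exp (-t₁ * U₁ ω + 3 * c / 2 * U₂ ω) := by
          gcongr <;> linarith
        exact h1.trans (le_add_of_nonneg_left (by positivity))
    · -- differentiability
      filter_upwards with ω
      intro s hs
      have h0 : HasDerivAt (fun s : ℝ => -t₁ * U₁ ω + s * U₂ ω) (U₂ ω) s := by
        simpa using ((hasDerivAt_id s).mul_const (U₂ ω)).const_add (-t₁ * U₁ ω)
      have := (h0.exp).const_mul (U₂ ω ^ n)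
      refine this.congr_deriv ?_
      rw [pow_succ]; ring
  have iterEq : ∀ n : ℕ, Set.EqOn (deriv^[n] (fun s => M (-t₁) s)) (E n) (Set.Iio 0) := by
    intro n
    induction n with
    | zero =>
      intro c hc
      simp only [Function.iterate_zero, id_eq, hE]
      rw [hM]
      exact integral_congr_ae (Filter.Eventually.of_forall fun ω => by simp)
    | succ n ih =>
      intro c hc
      rw [Function.iterate_succ_apply']
      have hev : deriv^[n] (fun s => M (-t₁) s) =ᶠ[nhds c] E n := by
        filter_upwards [Iio_mem_nhds hc] with x hx
        exact ih hx
      rw [hev.deriv_eq]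
      exact (hasDeriv n hc).deriv
  have hgInt : Integrable (fun ω => U₂ ω ^ j * Real.exp (-t₁ * U₁ ω)) P := by
    refine hI.mono ?_ ?_
    · exact ((hU₂meas.pow_const j).mul
        ((hU₁meas.const_mul (-t₁)).exp)).aestronglyMeasurable
    · filter_upwards with ω
      rw [norm_mul, Real.norm_eq_abs, Real.norm_eq_abs, abs_pow, abs_of_pos (Real.exp_pos _),
        Real.norm_of_nonneg (by positivity)]
  have hTend : Tendsto (E j) (nhdsWithin 0 (Set.Iio 0))
      (nhds (∫ ω, U₂ ω ^ j * Real.exp (-t₁ * U₁ ω) ∂P)) := by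
    refine tendsto_integral_filter_of_dominated_convergence
      (bound := fun ω => |U₂ ω| ^ j * Real.exp (-t₁ * U₁ ω + (-1) * U₂ ω)
        + |U₂ ω| ^ j * Real.exp (-t₁ * U₁ ω))
      (Filter.Eventually.of_forall fun c => measAux j c) ?_
      ((keyInt j (by norm_num : (-1:ℝ) < 0)).add hI) ?_
    · filter_upwards [Ioo_mem_nhdsLT_of_mem
        (show (0:ℝ) ∈ Set.Ioc (-1) 0 by norm_num)] with c hc
      filter_upwards with ω
      rw [normEq]
      rcases le_or_gt 0 (U₂ ω) with hω | hω
      · have : c * U₂ ω ≤ 0 := mul_nonpos_of_nonpos_of_nonneg hc.2.le hω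
        have h1 : |U₂ ω| ^ j * Real.exp (-t₁ * U₁ ω + c * U₂ ω)
            ≤ |U₂ ω| ^ j * Real.exp (-t₁ * U₁ ω) := by
          gcongr <;> linarith
        exact h1.trans (le_add_of_nonneg_left (by positivity))
      · have : c * U₂ ω ≤ (-1) * U₂ ω := mul_le_mul_of_nonpos_right hc.1.le hω.le
        have h1 : |U₂ ω| ^ j * Real.exp (-t₁ * U₁ ω + c * U₂ ω)
            ≤ |U₂ ω| ^ j * Real.exp (-t₁ * U₁ ω + (-1) * U₂ ω) := by
          gcongr <;> linarith
        exact h1.trans (le_add_of_nonneg_right (by positivity))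
    · filter_upwards with ω
      have hcont : Continuous fun c : ℝ =>
          U₂ ω ^ j * Real.exp (-t₁ * U₁ ω + c * U₂ ω) := by fun_prop
      have := (hcont.tendsto 0).mono_left (nhdsWithin_le_nhds (s := Set.Iio 0))
      simpa using this
  have hfe : (fun c => iteratedDeriv j (fun s => M (-t₁) s) c)
      =ᶠ[nhdsWithin (0:ℝ) (Set.Iio 0)] E j := by
    filter_upwards [self_mem_nhdsWithin] with c hc
    rw [iteratedDeriv_eq_iterate]
    exact iterEq j hc
  exact tendsto_nhds_unique hl (hTend.congr' hfe.symm)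


/-- Lemma on moments of ratios via the joint moment generating function. -/
theorem moment_ratio_via_mgf
    {Ω : Type*} [MeasurableSpace Ω] (P : Measure Ω) [IsProbabilityMeasure P]
    (U₁ U₂ : Ω → ℝ) (hU₁meas : Measurable U₁) (hU₂meas : Measurable U₂)
    (hU₁pos : ∀ ω, 0 < U₁ ω)
    (j k : ℕ) (hj : 0 < j) (hk : 0 < k)
    (M : ℝ → ℝ → ℝ)
    (hM : ∀ t₁ t₂, M t₁ t₂ = ∫ ω, Real.exp (t₁ * U₁ ω + t₂ * U₂ ω) ∂P)
    -- finiteness of the MGF on the relevant domain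
    (hMfin : ∀ t₁ > (0 : ℝ), ∀ t₂ ≤ (0 : ℝ),
      Integrable (fun ω => Real.exp (-t₁ * U₁ ω + t₂ * U₂ ω)) P)
    -- the expectation of interest exists
    (hInt : Integrable (fun ω => U₂ ω ^ j / U₁ ω ^ k) P)
    -- L t₁ is the limit as t₂ → 0⁻ of the j-th partial derivative ∂^j/∂t₂^j M(-t₁, t₂)
    (L : ℝ → ℝ)
    (hL : ∀ t₁ ∈ Set.Ioi (0 : ℝ),
      Tendsto (fun t₂ => iteratedDeriv j (fun s => M (-t₁) s) t₂)
        (nhdsWithin 0 (Set.Iio 0)) (nhds (L t₁))) :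
    ∫ ω, U₂ ω ^ j / U₁ ω ^ k ∂P =
      (1 / Real.Gamma k) * ∫ t₁ in Set.Ioi (0 : ℝ), t₁ ^ (k - 1) * L t₁ := by
  have hk' : (0:ℝ) < (k:ℝ) := by exact_mod_cast hk
  have hΓ : 0 < Real.Gamma k := Real.Gamma_pos_of_pos hk'
  have hcast : ((k - 1 : ℕ) : ℝ) = (k:ℝ) - 1 := by
    rw [Nat.cast_sub hk]; simp
  have gammaIntegrable : ∀ u : ℝ, 0 < u →
      IntegrableOn (fun t : ℝ => t ^ (k - 1) * Real.exp (-t * u)) (Set.Ioi 0) := by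
    intro u hu
    have h0 : IntegrableOn (fun x : ℝ => Real.exp (-x) * x ^ ((k:ℝ) - 1)) (Set.Ioi 0) :=
      Real.GammaIntegral_convergent hk'
    have h1 : IntegrableOn
        (fun t : ℝ => Real.exp (-(u * t)) * (u * t) ^ ((k:ℝ) - 1)) (Set.Ioi 0) := by
      have h0' : IntegrableOn (fun x : ℝ => Real.exp (-x) * x ^ ((k:ℝ) - 1))
          (Set.Ioi (u * 0)) := by rwa [mul_zero]
      exact (integrableOn_Ioi_comp_mul_left_iff
        (fun x : ℝ => Real.exp (-x) * x ^ ((k:ℝ) - 1)) 0 hu).2 h0'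
    have h2 : IntegrableOn
        (fun t : ℝ => (u ^ ((k:ℝ) - 1))⁻¹ * (Real.exp (-(u * t)) * (u * t) ^ ((k:ℝ) - 1)))
        (Set.Ioi 0) := h1.const_mul _
    refine h2.congr_fun ?_ measurableSet_Ioi
    intro t ht
    have htpos : (0:ℝ) < t := ht
    have hupow : (0:ℝ) < u ^ ((k:ℝ) - 1) := Real.rpow_pos_of_pos hu _
    show (u ^ ((k:ℝ) - 1))⁻¹ * (Real.exp (-(u * t)) * (u * t) ^ ((k:ℝ) - 1))
        = t ^ (k - 1) * Real.exp (-t * u)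
    rw [Real.mul_rpow hu.le htpos.le]
    have : t ^ ((k:ℝ) - 1) = t ^ (k - 1) := by
      rw [← hcast, Real.rpow_natCast]
    rw [← this]
    field_simp
  have gammaValue : ∀ u : ℝ, 0 < u →
      ∫ t in Set.Ioi (0:ℝ), t ^ (k - 1) * Real.exp (-t * u)
        = (1 / u) ^ k * Real.Gamma k := by
    intro u hu
    have h := Real.integral_rpow_mul_exp_neg_mul_Ioi (a := (k:ℝ)) hk' hu
    have h2 : ∫ t in Set.Ioi (0:ℝ), t ^ (k - 1) * Real.exp (-t * u)
        = ∫ t in Set.Ioi (0:ℝ), t ^ ((k:ℝ) - 1) * Real.exp (-(u * t)) := by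
      refine setIntegral_congr_fun measurableSet_Ioi fun t ht => ?_
      have htpos : (0:ℝ) < t := ht
      rw [← hcast, Real.rpow_natCast, mul_comm u t, neg_mul]
    rw [h2, h, ← Real.rpow_natCast (1/u) k]
  set f2 : Ω → ℝ → ℝ :=
    fun ω t => t ^ (k - 1) * (U₂ ω ^ j * Real.exp (-t * U₁ ω)) with hf2
  have hmeas : AEStronglyMeasurable (Function.uncurry f2)
      (P.prod (volume.restrict (Set.Ioi 0))) := by
    apply Measurable.aestronglyMeasurable
    exact (measurable_snd.pow_const (k - 1)).mul
      (((hU₂meas.comp measurable_fst).pow_const j).mul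
        ((measurable_snd.neg.mul (hU₁meas.comp measurable_fst)).exp))
  have hslice : ∀ ω, IntegrableOn (fun t => f2 ω t) (Set.Ioi 0) volume := by
    intro ω
    have h := (gammaIntegrable (U₁ ω) (hU₁pos ω)).const_mul (U₂ ω ^ j)
    exact h.congr (Filter.Eventually.of_forall fun t => by simp [hf2]; ring)
  have hratio_abs : Integrable (fun ω => |U₂ ω| ^ j * ((1 / U₁ ω) ^ k * Real.Gamma k)) P := by
    refine (hInt.abs.mul_const (Real.Gamma k)).congr
      (Filter.Eventually.of_forall fun ω => ?_)
    show |U₂ ω ^ j / U₁ ω ^ k| * Real.Gamma k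
        = |U₂ ω| ^ j * ((1 / U₁ ω) ^ k * Real.Gamma k)
    rw [abs_div, abs_pow, abs_pow, abs_of_pos (hU₁pos ω)]
    field_simp
    rw [one_div_pow, mul_one_div]
  have hnormval : ∀ ω, ∫ t in Set.Ioi (0:ℝ), ‖f2 ω t‖
      = |U₂ ω| ^ j * ((1 / U₁ ω) ^ k * Real.Gamma k) := by
    intro ω
    have h1 : ∫ t in Set.Ioi (0:ℝ), ‖f2 ω t‖
        = ∫ t in Set.Ioi (0:ℝ), |U₂ ω| ^ j * (t ^ (k - 1) * Real.exp (-t * U₁ ω)) := by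
      refine setIntegral_congr_fun measurableSet_Ioi fun t ht => ?_
      have htpos : (0:ℝ) < t := ht
      rw [Real.norm_eq_abs, abs_mul, abs_mul, abs_pow, abs_pow, abs_of_pos htpos,
        abs_of_pos (Real.exp_pos _)]
      ring
    rw [h1, integral_const_mul, gammaValue (U₁ ω) (hU₁pos ω)]
  have hFub : Integrable (Function.uncurry f2) (P.prod (volume.restrict (Set.Ioi 0))) := by
    refine (integrable_prod_iff hmeas).2 ⟨Filter.Eventually.of_forall hslice, ?_⟩
    refine hratio_abs.congr (Filter.Eventually.of_forall fun ω => (hnormval ω).symm)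
  have inner1 : ∀ ω, ∫ t in Set.Ioi (0:ℝ), f2 ω t
      = Real.Gamma k * (U₂ ω ^ j / U₁ ω ^ k) := by
    intro ω
    have h1 : ∫ t in Set.Ioi (0:ℝ), f2 ω t
        = ∫ t in Set.Ioi (0:ℝ), U₂ ω ^ j * (t ^ (k - 1) * Real.exp (-t * U₁ ω)) := by
      refine setIntegral_congr_fun measurableSet_Ioi fun t ht => by simp [hf2]; ring
    rw [h1, integral_const_mul, gammaValue (U₁ ω) (hU₁pos ω)]
    have hU := (hU₁pos ω).ne'
    field_simp
    rw [mul_assoc, one_div_pow, one_div_mul_cancel (pow_ne_zero k hU), mul_one]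
  have key : ∀ᵐ t ∂(volume.restrict (Set.Ioi (0:ℝ))),
      (∫ ω, f2 ω t ∂P) = t ^ (k - 1) * L t := by
    filter_upwards [hFub.prod_left_ae, ae_restrict_mem measurableSet_Ioi] with t hint ht
    have htpos : (0:ℝ) < t := ht
    have htk : (0:ℝ) < t ^ (k - 1) := by positivity
    have hint2 : Integrable (fun ω => U₂ ω ^ j * Real.exp (-t * U₁ ω)) P := by
      have h3 := hint.const_mul ((t ^ (k - 1))⁻¹)
      refine h3.congr (Filter.Eventually.of_forall fun ω => ?_)
      show (t ^ (k-1))⁻¹ * f2 ω t = _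
      rw [hf2]
      field_simp
    have hintabs : Integrable (fun ω => |U₂ ω| ^ j * Real.exp (-t * U₁ ω)) P := by
      refine hint2.abs.congr (Filter.Eventually.of_forall fun ω => ?_)
      show |U₂ ω ^ j * Real.exp (-t * U₁ ω)| = |U₂ ω| ^ j * Real.exp (-t * U₁ ω)
      rw [abs_mul, abs_pow, abs_of_pos (Real.exp_pos _)]
    have hLt : L t = ∫ ω, U₂ ω ^ j * Real.exp (-t * U₁ ω) ∂P :=
      stepA P U₁ U₂ hU₁meas hU₂meas j M hM hMfin htpos hintabs (hL t ht)
    rw [hLt]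
    exact integral_const_mul _ _
  have swap := integral_integral_swap hFub
  have LHS : ∫ ω, (∫ t in Set.Ioi (0:ℝ), f2 ω t) ∂P
      = Real.Gamma k * ∫ ω, U₂ ω ^ j / U₁ ω ^ k ∂P := by
    rw [integral_congr_ae (Filter.Eventually.of_forall inner1)]
    exact integral_const_mul _ _
  have main : Real.Gamma k * ∫ ω, U₂ ω ^ j / U₁ ω ^ k ∂P
      = ∫ t in Set.Ioi (0:ℝ), t ^ (k - 1) * L t := by
    rw [← LHS, swap]
    exact integral_congr_ae key
  rw [← main, one_div, inv_mul_cancel_left₀ hΓ.ne']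

end
end

section
/- The function g_bessel(φ) = (1 − φ + φ² e^φ Ei(φ))/2, with Ei(φ) = ∫₁^∞ u^{−1} e^{−φu} du, is strictly decreasing on (0, ∞). -/
open MeasureTheory

/-- Exponential integral function Ei(φ) = ∫₁^∞ u⁻¹ e^{-φu} du. -/
noncomputable def expInt (φ : ℝ) : ℝ :=
  ∫ u in Set.Ioi (1 : ℝ), u⁻¹ * Real.exp (-φ * u)

open Set Real

namespace GBessel

lemma integral_Ioi_comp_add_right (f : ℝ → ℝ) (a d : ℝ) :
    ∫ x in Ioi a, f (x + d) = ∫ x in Ioi (a + d), f x := by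
  have h := (measurePreserving_add_right (volume : Measure ℝ) d).setIntegral_preimage_emb
    (MeasurableEquiv.addRight d).measurableEmbedding f (Ioi (a + d))
  simpa [MeasurableEquiv.addRight, preimage_add_const_Ioi] using h

/-- The auxiliary integral. -/
noncomputable def F (φ : ℝ) : ℝ := ∫ s in Ioi (0 : ℝ), s ^ 2 * rexp (-s) / (φ + s)

lemma integrable_t_exp : IntegrableOn (fun t : ℝ => t * rexp (-t)) (Ioi 0) := by
  have h := Real.GammaIntegral_convergent (by norm_num : (0:ℝ) < 2)
  refine h.congr_fun ?_ measurableSet_Ioi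
  intro x hx
  simp only [show (2:ℝ) - 1 = 1 by norm_num, Real.rpow_one]
  ring

lemma integrable_exp : IntegrableOn (fun t : ℝ => rexp (-t)) (Ioi (0:ℝ)) := by
  simpa using exp_neg_integrableOn_Ioi 0 (by norm_num : (0:ℝ) < 1)

lemma integrable_F {φ : ℝ} (hφ : 0 < φ) :
    IntegrableOn (fun s : ℝ => s ^ 2 * rexp (-s) / (φ + s)) (Ioi 0) := by
  refine Integrable.mono' integrable_t_exp ?_ ?_
  · apply Measurable.aestronglyMeasurable
    fun_prop
  · filter_upwards [ae_restrict_mem measurableSet_Ioi] with s hs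
    have hs0 : 0 < s := hs
    have hden : 0 < φ + s := by linarith
    rw [Real.norm_of_nonneg (by positivity)]
    rw [div_le_iff₀ hden]
    calc s ^ 2 * rexp (-s) = s * rexp (-s) * s := by ring
      _ ≤ s * rexp (-s) * (φ + s) := by
          apply mul_le_mul_of_nonneg_left (by linarith) (by positivity)

lemma integrable_aux {φ : ℝ} (hφ : 0 < φ) :
    IntegrableOn (fun t : ℝ => φ ^ 2 / (φ + t) * rexp (-t)) (Ioi 0) := by
  refine Integrable.mono' (integrable_exp.const_mul φ) ?_ ?_
  · apply Measurable.aestronglyMeasurable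
    fun_prop
  · filter_upwards [ae_restrict_mem measurableSet_Ioi] with s hs
    have hs0 : 0 < s := hs
    have hden : 0 < φ + s := by linarith
    rw [Real.norm_of_nonneg (by positivity)]
    rw [div_mul_eq_mul_div, div_le_iff₀ hden]
    calc φ ^ 2 * rexp (-s) = φ * rexp (-s) * φ := by ring
      _ ≤ φ * rexp (-s) * (φ + s) := by
          apply mul_le_mul_of_nonneg_left (by linarith) (by positivity)

/-- Key identity: for `φ > 0`, `1 - φ + φ² e^φ Ei(φ) = ∫₀^∞ s² e^{-s}/(φ+s)`. -/
lemma integral_t_exp_eq_one : ∫ t in Ioi (0:ℝ), t * rexp (-t) = 1 := by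
  have h2 : Real.Gamma 2 = 1 := by
    set_option linter.unnecessarySimpa false in
    simpa using Real.Gamma_nat_eq_factorial 1
  rw [Real.Gamma_eq_integral (by norm_num : (0:ℝ) < 2)] at h2
  rw [← h2]
  refine setIntegral_congr_fun measurableSet_Ioi fun x hx => ?_
  have hx0 : (0:ℝ) < x := hx
  rw [show (2:ℝ) - 1 = 1 by norm_num, Real.rpow_one]
  ring

lemma integrable_sub_exp {φ : ℝ} :
    IntegrableOn (fun t : ℝ => (φ - t) * rexp (-t)) (Ioi 0) := by
  have : (fun t : ℝ => (φ - t) * rexp (-t))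
      = fun t : ℝ => φ * rexp (-t) - t * rexp (-t) := by
    funext t; ring
  rw [this]
  exact (integrable_exp.const_mul φ).sub integrable_t_exp

/-- Key identity: for `φ > 0`, `1 - φ + φ² e^φ Ei(φ) = ∫₀^∞ s² e^{-s}/(φ+s)`. -/
lemma key {φ : ℝ} (hφ : 0 < φ) :
    1 - φ + φ ^ 2 * rexp φ * expInt φ = F φ := by
  -- Step 1: translate the integral to start at 0
  have step1 : expInt φ = ∫ s in Ioi (0:ℝ), (s + 1)⁻¹ * rexp (-φ * (s + 1)) := by
    have := integral_Ioi_comp_add_right (fun u => u⁻¹ * rexp (-φ * u)) 0 1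
    norm_num at this
    rw [expInt]
    simp only [neg_mul]
    exact this.symm
  -- Step 2: absorb e^φ
  have step2 : rexp φ * expInt φ = ∫ s in Ioi (0:ℝ), (s + 1)⁻¹ * rexp (-φ * s) := by
    rw [step1, ← integral_const_mul]
    refine setIntegral_congr_fun measurableSet_Ioi fun s hs => ?_
    rw [← mul_assoc, mul_comm (rexp φ), mul_assoc, ← Real.exp_add]
    ring_nf
  -- Step 3: rescale t = φ s
  have step3 : rexp φ * expInt φ
      = φ⁻¹ * ∫ t in Ioi (0:ℝ), (t / φ + 1)⁻¹ * rexp (-t) := by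
    rw [step2]
    have := integral_comp_mul_left_Ioi (fun t => (t / φ + 1)⁻¹ * rexp (-t)) 0 hφ
    simp only [mul_zero, smul_eq_mul] at this
    rw [← this]
    refine setIntegral_congr_fun measurableSet_Ioi fun s hs => ?_
    rw [mul_div_cancel_left₀ _ hφ.ne', neg_mul]
  -- Step 4
  have step4 : φ ^ 2 * rexp φ * expInt φ
      = ∫ t in Ioi (0:ℝ), φ ^ 2 / (φ + t) * rexp (-t) := by
    rw [mul_assoc, step3, ← mul_assoc, ← integral_const_mul]
    refine setIntegral_congr_fun measurableSet_Ioi fun t ht => ?_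
    have ht0 : (0:ℝ) < t := ht
    have h1 : t / φ + 1 = (t + φ) / φ := by field_simp
    rw [h1]
    rw [inv_div]
    field_simp
    ring
  -- Step 5: split the integrand
  have step5 : (∫ t in Ioi (0:ℝ), φ ^ 2 / (φ + t) * rexp (-t))
      = (∫ t in Ioi (0:ℝ), (φ - t) * rexp (-t))
        + ∫ t in Ioi (0:ℝ), t ^ 2 * rexp (-t) / (φ + t) := by
    rw [← integral_add integrable_sub_exp (integrable_F hφ)]
    refine setIntegral_congr_fun measurableSet_Ioi fun t ht => ?_
    have ht0 : (0:ℝ) < t := ht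
    have hden : φ + t ≠ 0 := by positivity
    field_simp
    ring
  have step6 : (∫ t in Ioi (0:ℝ), (φ - t) * rexp (-t)) = φ - 1 := by
    have : (fun t : ℝ => (φ - t) * rexp (-t))
        = fun t : ℝ => φ * rexp (-t) - t * rexp (-t) := by
      funext t; ring
    rw [this, integral_sub (integrable_exp.const_mul φ) integrable_t_exp,
      integral_const_mul, integral_exp_neg_Ioi_zero, integral_t_exp_eq_one]
    ring
  rw [step4, step5, step6, F]
  ring

lemma F_strictAnti : StrictAntiOn F (Ioi (0:ℝ)) := by
  intro a ha b hb hab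
  have ha0 : (0:ℝ) < a := ha
  have hb0 : (0:ℝ) < b := hb
  have hint : IntegrableOn
      (fun s : ℝ => s ^ 2 * rexp (-s) / (a + s) - s ^ 2 * rexp (-s) / (b + s)) (Ioi 0) :=
    (integrable_F ha0).sub (integrable_F hb0)
  have hpos : 0 < ∫ s in Ioi (0:ℝ),
      (s ^ 2 * rexp (-s) / (a + s) - s ^ 2 * rexp (-s) / (b + s)) := by
    have hnn : 0 ≤ᵐ[volume.restrict (Ioi (0:ℝ))]
        (fun s : ℝ => s ^ 2 * rexp (-s) / (a + s) - s ^ 2 * rexp (-s) / (b + s)) := by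
      filter_upwards [ae_restrict_mem measurableSet_Ioi] with s hs
      have hs0 : (0:ℝ) < s := hs
      have : s ^ 2 * rexp (-s) / (b + s) ≤ s ^ 2 * rexp (-s) / (a + s) := by
        apply div_le_div_of_nonneg_left (by positivity) (by linarith) (by linarith)
      simpa using this
    rw [setIntegral_pos_iff_support_of_nonneg_ae hnn hint]
    · have : Ioi (0:ℝ) ⊆ Function.support
          (fun s : ℝ => s ^ 2 * rexp (-s) / (a + s) - s ^ 2 * rexp (-s) / (b + s)) ∩ Ioi 0 := by
        intro s hs
        have hs0 : (0:ℝ) < s := hs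
        refine ⟨?_, hs⟩
        have h1 : s ^ 2 * rexp (-s) / (b + s) < s ^ 2 * rexp (-s) / (a + s) := by
          apply div_lt_div_of_pos_left (by positivity) (by linarith) (by linarith)
        simp only [Function.mem_support]
        intro h
        rw [sub_eq_zero] at h
        exact absurd h (ne_of_gt h1)
      calc (0 : ENNReal) < volume (Ioi (0:ℝ)) := by simp
        _ ≤ _ := measure_mono this
  rw [integral_sub (integrable_F ha0) (integrable_F hb0)] at hpos
  simpa [F] using sub_pos.mp hpos

end GBessel

/-- g_bessel is strictly decreasing on (0, ∞). -/
theorem g_bessel_strictAnti :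
    StrictAntiOn (fun φ : ℝ => (1 - φ + φ ^ 2 * Real.exp φ * expInt φ) / 2)
      (Set.Ioi 0) := by
  intro a ha b hb hab
  have h1 := GBessel.key (show (0:ℝ) < a from ha)
  have h2 := GBessel.key (show (0:ℝ) < b from hb)
  have := GBessel.F_strictAnti ha hb hab
  simp only
  rw [h1, h2]
  linarith
end

section
/- For every φ > 0, g_bessel(φ) = (1 − φ + φ² e^φ Ei(φ))/2 > 0; equivalently, φ² e^φ Ei(φ) > φ − 1, where Ei(φ) = ∫₁^∞ u^{−1} e^{−φu} du. -/
open MeasureTheory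

open Set Real Filter Topology

lemma tendsto_linear_mul_exp (a b φ : ℝ) (hφ : 0 < φ) :
    Tendsto (fun u : ℝ => (a * u + b) * Real.exp (-φ * u)) atTop (𝓝 0) := by
  have h1 : Tendsto (fun u : ℝ => u * Real.exp (-φ * u)) atTop (𝓝 0) := by
    have := tendsto_rpow_mul_exp_neg_mul_atTop_nhds_zero 1 φ hφ
    refine this.congr' ?_
    filter_upwards [eventually_gt_atTop (0:ℝ)] with x hx
    rw [Real.rpow_one]
  have h2 : Tendsto (fun u : ℝ => Real.exp (-φ * u)) atTop (𝓝 0) := by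
    have := Real.tendsto_exp_neg_atTop_nhds_zero.comp (tendsto_id.const_mul_atTop hφ)
    exact this.congr fun x => by simp [neg_mul]
  have h3 := (h1.const_mul a).add (h2.const_mul b)
  simp only [add_zero, mul_zero] at h3
  exact h3.congr fun x => by ring

lemma exp_neg_mul_hasDerivAt (φ x : ℝ) :
    HasDerivAt (fun u : ℝ => Real.exp (-φ * u)) (Real.exp (-φ * x) * (-φ)) x := by
  have h : HasDerivAt (fun u : ℝ => -φ * u) (-φ) x := by
    simpa using (hasDerivAt_id x).const_mul (-φ)
  simpa using h.exp

lemma antideriv_hasDerivAt (a b φ x : ℝ) (hφ : 0 < φ) :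
    HasDerivAt (fun u : ℝ => (-(a/φ) * u + (-(a/φ^2) - b/φ)) * Real.exp (-φ * u))
      ((a * x + b) * Real.exp (-φ * x)) x := by
  have h1 : HasDerivAt (fun u : ℝ => (-(a/φ) * u + (-(a/φ^2) - b/φ))) (-(a/φ)) x := by
    simpa using ((hasDerivAt_id x).const_mul (-(a/φ))).add_const (-(a/φ^2) - b/φ)
  have := h1.mul (exp_neg_mul_hasDerivAt φ x)
  convert (show HasDerivAt (fun u : ℝ => (-(a/φ) * u + (-(a/φ^2) - b/φ)) * Real.exp (-φ * u)) _ x from this) using 1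
  field_simp
  ring

lemma integrable_linear_mul_exp (a b φ : ℝ) (hφ : 0 < φ) :
    IntegrableOn (fun u : ℝ => (a * u + b) * Real.exp (-φ * u)) (Ioi 1) := by
  have key : IntegrableOn (fun u : ℝ => (1 * u + 0) * Real.exp (-φ * u)) (Ioi 1) := by
    refine integrableOn_Ioi_deriv_of_nonneg' (a := 1)
      (fun x _ => antideriv_hasDerivAt 1 0 φ x hφ) ?_
      (tendsto_linear_mul_exp _ _ φ hφ)
    intro x hx
    have hx0 : (0:ℝ) < x := lt_trans one_pos hx
    have := Real.exp_pos (-φ * x)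
    nlinarith
  have expint : IntegrableOn (fun u : ℝ => Real.exp (-φ * u)) (Ioi 1) :=
    exp_neg_integrableOn_Ioi 1 hφ
  have h := (key.const_mul a).add (expint.const_mul b)
  exact IntegrableOn.congr_fun h (fun x _ => by simp only [Pi.add_apply]; ring) measurableSet_Ioi

lemma integral_linear_mul_exp (a b φ : ℝ) (hφ : 0 < φ) :
    ∫ u in Ioi (1:ℝ), (a * u + b) * Real.exp (-φ * u)
      = (a/φ + a/φ^2 + b/φ) * Real.exp (-φ) := by
  have := integral_Ioi_of_hasDerivAt_of_tendsto'
    (fun x _ => antideriv_hasDerivAt a b φ x hφ)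
    (integrable_linear_mul_exp a b φ hφ) (tendsto_linear_mul_exp _ _ φ hφ)
  rw [this]
  field_simp
  ring

theorem expInt_gt (φ : ℝ) (hφ : 0 < φ) :
    (1/φ - 1/φ^2) * Real.exp (-φ) < expInt φ := by
  have hint2 : IntegrableOn (fun u : ℝ => ((-1) * u + 2) * Real.exp (-φ * u)) (Ioi 1) :=
    integrable_linear_mul_exp (-1) 2 φ hφ
  have hint1 : IntegrableOn (fun u : ℝ => u⁻¹ * Real.exp (-φ * u)) (Ioi 1) := by
    refine (exp_neg_integrableOn_Ioi 1 hφ).mono' ?_ ?_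
    · exact (Measurable.inv measurable_id).aestronglyMeasurable.mul
        (Real.measurable_exp.comp (measurable_id.const_mul (-φ))).aestronglyMeasurable
    · filter_upwards [ae_restrict_mem measurableSet_Ioi] with x hx
      have hx1 : (1:ℝ) < x := hx
      have hx0 : (0:ℝ) < x := lt_trans one_pos hx1
      rw [norm_mul, norm_eq_abs, norm_eq_abs, abs_of_pos (by positivity),
        abs_of_pos (Real.exp_pos _)]
      nlinarith [Real.exp_pos (-φ * x), inv_pos.mpr hx0, mul_inv_cancel₀ (ne_of_gt hx0)]
  have hae : 0 ≤ᵐ[volume.restrict (Ioi (1:ℝ))]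
      fun u : ℝ => u⁻¹ * Real.exp (-φ * u) - ((-1) * u + 2) * Real.exp (-φ * u) := by
    filter_upwards [ae_restrict_mem measurableSet_Ioi] with x hx
    have hx1 : (1:ℝ) < x := hx
    have hx0 : (0:ℝ) < x := lt_trans one_pos hx1
    have h : (-1) * x + 2 ≤ x⁻¹ := by
      rw [← sub_nonneg]
      have hrepr : x⁻¹ - ((-1) * x + 2) = (x - 1)^2 / x := by field_simp; ring
      rw [hrepr]; positivity
    have := Real.exp_pos (-φ * x)
    simp only [Pi.zero_apply]
    nlinarith
  have hpos : 0 < ∫ u in Ioi (1:ℝ),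
      (u⁻¹ * Real.exp (-φ * u) - ((-1) * u + 2) * Real.exp (-φ * u)) := by
    rw [setIntegral_pos_iff_support_of_nonneg_ae hae (hint1.sub hint2)]
    have hsupp : Ioi (2:ℝ) ⊆ (Function.support fun u : ℝ =>
        u⁻¹ * Real.exp (-φ * u) - ((-1) * u + 2) * Real.exp (-φ * u)) ∩ Ioi 1 := by
      intro x hx
      have hx2 : (2:ℝ) < x := hx
      have hx0 : (0:ℝ) < x := by linarith
      refine ⟨ne_of_gt ?_, by simp only [mem_Ioi]; linarith⟩
      nlinarith [Real.exp_pos (-φ * x), inv_pos.mpr hx0]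
    calc (0:ENNReal) < volume (Ioi (2:ℝ)) := by
          rw [Real.volume_Ioi]; exact ENNReal.zero_lt_top
      _ ≤ _ := measure_mono hsupp
  have hval : (∫ u in Ioi (1:ℝ),
      (u⁻¹ * Real.exp (-φ * u) - ((-1) * u + 2) * Real.exp (-φ * u)))
      = expInt φ - (1/φ - 1/φ^2) * Real.exp (-φ) := by
    rw [integral_sub hint1 hint2, integral_linear_mul_exp (-1) 2 φ hφ]
    unfold expInt
    ring
  rw [hval] at hpos
  linarith

/-- For every φ > 0, g_bessel(φ) > 0, i.e. φ² e^φ Ei(φ) > φ − 1. -/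
theorem g_bessel_pos (φ : ℝ) (hφ : 0 < φ) :
    0 < (1 - φ + φ ^ 2 * Real.exp φ * expInt φ) / 2 ∧
    φ - 1 < φ ^ 2 * Real.exp φ * expInt φ := by
  have h := expInt_gt φ hφ
  have he : Real.exp φ * Real.exp (-φ) = 1 := by
    rw [← Real.exp_add]; simp
  have key : φ - 1 < φ ^ 2 * Real.exp φ * expInt φ := by
    have h2 : φ ^ 2 * Real.exp φ * ((1/φ - 1/φ^2) * Real.exp (-φ))
        < φ ^ 2 * Real.exp φ * expInt φ := by
      apply mul_lt_mul_of_pos_left h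
      positivity
    have h3 : φ ^ 2 * Real.exp φ * ((1/φ - 1/φ^2) * Real.exp (-φ)) = φ - 1 := by
      have h4 : φ ^ 2 * (1/φ - 1/φ^2) = φ - 1 := by
        field_simp
      calc φ ^ 2 * Real.exp φ * ((1/φ - 1/φ^2) * Real.exp (-φ))
          = (φ ^ 2 * (1/φ - 1/φ^2)) * (Real.exp φ * Real.exp (-φ)) := by ring
        _ = φ - 1 := by rw [he, h4, mul_one]
    linarith
  exact ⟨by linarith, key⟩
end
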